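/- Let (F, W, ≻) be a many-to-many matching market in which every agent's preference is substitutable and satisfies the law of aggregate demand (LAD), let h be a stable matching rule, let f ∈ F be a firm, and let μ be a stable matching for (F, W, ≻). Define ≻''_f = ≻_f |_{μ(f)} and ≻'' = (≻_{-f}, ≻''_f). Then h(≻'')(f) = μ(f). -/

import Mathlib

/-!
Common framework for many-to-many matching markets (Manasero–Oviedo,
"General Manipulability Theorem for a Matching Model").

Agents on each side have strict linear orders (strict total orders) over
finsets of the other side.  `Pref.Ch` is the choice function, selecting the
most preferred subset.
-/

/-- A strict preference of an agent over subsets of the (finite) set `α` of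
potential partners: a strict total order on `Finset α`, where `gt S T` means
`S` is strictly preferred to `T`. -/
structure Pref (α : Type*) [DecidableEq α] [Fintype α] where
  gt : Finset α → Finset α → Prop
  isSTO : IsStrictTotalOrder (Finset α) gt

namespace Pref

variable {α : Type*} [DecidableEq α] [Fintype α]

/-- The choice set `Ch(S, ≻)`: the `≻`-maximal subset of `S`. -/
noncomputable def Ch (p : Pref α) (S : Finset α) : Finset α := by
  classical
  haveI := p.isSTO
  haveI : IsStrictTotalOrder (Finset α) (Function.swap p.gt) := IsStrictTotalOrder.swap _
  exact @Finset.max' _ (linearOrderOfSTO (Function.swap p.gt)) S.powerset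
    ⟨∅, Finset.empty_mem_powerset S⟩

/-- Substitutability: if `w ∈ Ch(S)` then `w ∈ Ch(S \ {w'})` for any other `w' ∈ S`. -/
def Substitutable (p : Pref α) : Prop :=
  ∀ (S : Finset α) (w w' : α), w ∈ S → w' ∈ S → w ≠ w' →
    w ∈ p.Ch S → w ∈ p.Ch (S.erase w')

/-- Law of aggregate demand: `Y ⊆ X` implies `|Ch(Y)| ≤ |Ch(X)|`. -/
def LAD (p : Pref α) : Prop :=
  ∀ Y X : Finset α, Y ⊆ X → (p.Ch Y).card ≤ (p.Ch X).card

/-- `p.HasList L` : the sets in `L` are exactly the acceptable sets, in strictly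
decreasing order of preference and all preferred to `∅`; any set not in the
list (other than `∅`) is unacceptable, i.e. worse than `∅`. -/
def HasList (p : Pref α) (L : List (Finset α)) : Prop :=
  List.Chain' p.gt (L ++ [∅]) ∧ ∀ S : Finset α, S ∉ L → S ≠ ∅ → p.gt ∅ S

/-- `q`-separability of a preference with quota `q`. -/
def QSeparable (p : Pref α) (q : ℕ) : Prop :=
  (∀ S : Finset α, q < S.card → p.gt ∅ S) ∧
  (∀ (S : Finset α) (v : α), v ∉ S → S.card < q → (p.gt (insert v S) S ↔ p.gt {v} ∅))

end Pref

/-- `p'` is the restriction `p |_T` of `p` to `T`: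
(i) any set not contained in `T` is worse than `∅`;
(ii) for `S ⊆ T`, `S ≻' ∅ ↔ S ≻ ∅`;
(iii) for `S, S' ⊆ T`, `S ≻' S' ↔ S ≻ S'`. -/
def IsRestriction {α : Type*} [DecidableEq α] [Fintype α]
    (p : Pref α) (T : Finset α) (p' : Pref α) : Prop :=
  (∀ S : Finset α, ¬ S ⊆ T → p'.gt ∅ S) ∧
  (∀ S : Finset α, S ⊆ T → (p'.gt S ∅ ↔ p.gt S ∅)) ∧
  (∀ S S' : Finset α, S ⊆ T → S' ⊆ T → (p'.gt S S' ↔ p.gt S S'))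

variable (F W : Type*) [DecidableEq F] [Fintype F] [DecidableEq W] [Fintype W]

/-- A (many-to-many) matching between firms `F` and workers `W`. -/
structure Matching where
  fm : F → Finset W
  wm : W → Finset F
  compat : ∀ f w, w ∈ fm f ↔ f ∈ wm w

/-- A preference profile: one preference for each firm and each worker. -/
structure Profile where
  fp : F → Pref W
  wp : W → Pref F

variable {F W}

/-- All agents' preferences are substitutable. -/
def Profile.Substitutable (P : Profile F W) : Prop :=
  (∀ f, (P.fp f).Substitutable) ∧ (∀ w, (P.wp w).Substitutable)

/-- All agents' preferences satisfy the law of aggregate demand. -/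
def Profile.LAD (P : Profile F W) : Prop :=
  (∀ f, (P.fp f).LAD) ∧ (∀ w, (P.wp w).LAD)

/-- The profile obtained from `P` by replacing firm `f`'s preference by `p`. -/
def Profile.updateFirm (P : Profile F W) (f : F) (p : Pref W) : Profile F W :=
  ⟨Function.update P.fp f p, P.wp⟩

/-- The profile obtained from `P` by replacing worker `w`'s preference by `p`. -/
def Profile.updateWorker (P : Profile F W) (w : W) (p : Pref F) : Profile F W :=
  ⟨P.fp, Function.update P.wp w p⟩

/-- Individual rationality: every agent chooses its whole assignment. -/
def IndRational (P : Profile F W) (μ : Matching F W) : Prop :=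
  (∀ f, (P.fp f).Ch (μ.fm f) = μ.fm f) ∧ (∀ w, (P.wp w).Ch (μ.wm w) = μ.wm w)

/-- The pair `(w, f)` blocks the matching `μ`. -/
def Blocks (P : Profile F W) (μ : Matching F W) (w : W) (f : F) : Prop :=
  w ∉ μ.fm f ∧ w ∈ (P.fp f).Ch (insert w (μ.fm f)) ∧ f ∈ (P.wp w).Ch (insert f (μ.wm w))

/-- (Pairwise) stability. -/
def Stable (P : Profile F W) (μ : Matching F W) : Prop :=
  IndRational P μ ∧ ∀ w f, ¬ Blocks P μ w f

/-- `μF` is the firm-optimal stable matching for `P`. -/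
def FirmOptimal (P : Profile F W) (μF : Matching F W) : Prop :=
  Stable P μF ∧ ∀ μ, Stable P μ → ∀ f, μF.fm f = μ.fm f ∨ (P.fp f).gt (μF.fm f) (μ.fm f)

/-- `μW` is the worker-optimal stable matching for `P`. -/
def WorkerOptimal (P : Profile F W) (μW : Matching F W) : Prop :=
  Stable P μW ∧ ∀ μ, Stable P μ → ∀ w, μW.wm w = μ.wm w ∨ (P.wp w).gt (μW.wm w) (μ.wm w)

/-- Firm `f` satisfies the manipulability property (w.r.t. the rule `h`, the true
profile `P` and the firm-optimal stable matching `μF`): if `h(≻)(f) ≠ μF(≻)(f)`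
then some report `≻'_f` (in the domain: substitutable and LAD) gives `f` a
strictly `≻_f`-better assignment. -/
def FirmManip (h : Profile F W → Matching F W) (P : Profile F W)
    (μF : Matching F W) (f : F) : Prop :=
  (h P).fm f ≠ μF.fm f → ∃ p' : Pref W, p'.Substitutable ∧ p'.LAD ∧
    (P.fp f).gt ((h (P.updateFirm f p')).fm f) ((h P).fm f)

/-- Firm `f` satisfies the manipulability property with Blair order. -/
def FirmManipB (h : Profile F W → Matching F W) (P : Profile F W)
    (μF : Matching F W) (f : F) : Prop :=
  (h P).fm f ≠ μF.fm f → ∃ p' : Pref W, p'.Substitutable ∧ p'.LAD ∧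
    ((P.fp f).Ch ((h (P.updateFirm f p')).fm f ∪ (h P).fm f) = (h (P.updateFirm f p')).fm f ∧
      (h (P.updateFirm f p')).fm f ≠ (h P).fm f)

/-- Worker `w` satisfies the manipulability property. -/
def WorkerManip (h : Profile F W → Matching F W) (P : Profile F W)
    (μW : Matching F W) (w : W) : Prop :=
  (h P).wm w ≠ μW.wm w → ∃ p' : Pref F, p'.Substitutable ∧ p'.LAD ∧
    (P.wp w).gt ((h (P.updateWorker w p')).wm w) ((h P).wm w)

/-- Worker `w` satisfies the manipulability property with Blair order. -/
def WorkerManipB (h : Profile F W → Matching F W) (P : Profile F W)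
    (μW : Matching F W) (w : W) : Prop :=
  (h P).wm w ≠ μW.wm w → ∃ p' : Pref F, p'.Substitutable ∧ p'.LAD ∧
    ((P.wp w).Ch ((h (P.updateWorker w p')).wm w ∪ (h P).wm w) = (h (P.updateWorker w p')).wm w ∧
      (h (P.updateWorker w p')).wm w ≠ (h P).wm w)


set_option linter.unusedSectionVars false

namespace Pref

variable {α : Type*} [DecidableEq α] [Fintype α]

theorem Ch_spec (p : Pref α) (S : Finset α) :
    p.Ch S ⊆ S ∧ ∀ A ⊆ S, A = p.Ch S ∨ p.gt (p.Ch S) A := by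
  classical
  haveI := p.isSTO
  haveI h2 : IsStrictTotalOrder (Finset α) (Function.swap p.gt) := IsStrictTotalOrder.swap _
  unfold Ch
  constructor
  · have := @Finset.max'_mem _ (linearOrderOfSTO (Function.swap p.gt)) S.powerset
      ⟨∅, Finset.empty_mem_powerset S⟩
    simpa [Finset.mem_powerset] using this
  · intro A hA
    have := @Finset.le_max' _ (linearOrderOfSTO (Function.swap p.gt)) S.powerset A
      (by simpa [Finset.mem_powerset] using hA)
    exact this

theorem Ch_subset (p : Pref α) (S : Finset α) : p.Ch S ⊆ S := (p.Ch_spec S).1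

theorem Ch_max (p : Pref α) {S A : Finset α} (hA : A ⊆ S) :
    A = p.Ch S ∨ p.gt (p.Ch S) A := (p.Ch_spec S).2 A hA

theorem gt_trans (p : Pref α) {A B C : Finset α} (h1 : p.gt A B) (h2 : p.gt B C) :
    p.gt A C := by
  haveI := p.isSTO
  exact _root_.trans h1 h2

theorem gt_irrefl (p : Pref α) (A : Finset α) : ¬ p.gt A A := by
  haveI := p.isSTO
  exact irrefl A

theorem gt_asymm (p : Pref α) {A B : Finset α} (h : p.gt A B) : ¬ p.gt B A := by
  haveI := p.isSTO
  exact asymm h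

/-- Uniqueness of the choice set. -/
theorem Ch_eq_of (p : Pref α) {S A : Finset α} (hA : A ⊆ S)
    (hmax : ∀ B ⊆ S, B ≠ A → p.gt A B) : p.Ch S = A := by
  rcases p.Ch_max hA with h | h
  · exact h.symm
  · by_contra hne
    exact p.gt_asymm h (hmax _ (p.Ch_subset S) (Ne.symm (by
      intro hEq; exact absurd hEq.symm (by intro hEq2; rw [hEq2] at h; exact p.gt_irrefl _ h))))

/-- Consistency (Aizerman): if `Ch S' ⊆ S ⊆ S'` then `Ch S = Ch S'`. -/
theorem Ch_consistent (p : Pref α) {S S' : Finset α} (h1 : p.Ch S' ⊆ S) (h2 : S ⊆ S') :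
    p.Ch S = p.Ch S' := by
  refine p.Ch_eq_of h1 (fun B hB hne => ?_)
  rcases p.Ch_max (hB.trans h2) with h | h
  · exact absurd h.symm (Ne.symm hne)
  · exact h

theorem Ch_idem (p : Pref α) (S : Finset α) : p.Ch (p.Ch S) = p.Ch S :=
  p.Ch_consistent subset_rfl (p.Ch_subset S)

/-- Iterated substitutability. -/
theorem subs_mono (p : Pref α) (hp : p.Substitutable) {S S' : Finset α} {w : α}
    (hss : S ⊆ S') (hw : w ∈ S) (hch : w ∈ p.Ch S') : w ∈ p.Ch S := by
  classical
  generalize hn : (S' \ S).card = n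
  induction n generalizing S' with
  | zero =>
    have : S' = S := by
      have : S' \ S = ∅ := Finset.card_eq_zero.mp hn
      have h4 : S' ⊆ S := fun x hx => by
        by_contra hxS
        exact absurd (Finset.mem_sdiff.mpr ⟨hx, hxS⟩) (by simp [this])
      exact Finset.Subset.antisymm h4 hss
    rwa [← this]
  | succ n ih =>
    obtain ⟨w', hw'⟩ : (S' \ S).Nonempty := by
      rw [← Finset.card_pos, hn]; omega
    rw [Finset.mem_sdiff] at hw'
    have hne : w ≠ w' := fun hEq => hw'.2 (hEq ▸ hw)
    have hstep : w ∈ p.Ch (S'.erase w') :=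
      hp S' w w' (hss hw) hw'.1 hne hch
    have hsub2 : S ⊆ S'.erase w' := fun x hx =>
      Finset.mem_erase.mpr ⟨fun hEq => hw'.2 (hEq ▸ hx), hss hx⟩
    refine ih hsub2 hstep ?_
    have : S'.erase w' \ S = (S' \ S).erase w' := by
      ext x; simp [Finset.mem_erase, Finset.mem_sdiff, and_comm, and_assoc, and_left_comm]
    rw [this, Finset.card_erase_of_mem (by rw [Finset.mem_sdiff]; exact hw'), hn]
    rfl
  
/-- IR-extension: if `Ch S = S` and no element of `S'` outside `S` is chosen
when added alone, then `Ch (S ∪ S') = S`. -/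
theorem Ch_union_eq (p : Pref α) (hp : p.Substitutable) {S S' : Finset α}
    (hIR : p.Ch S = S) (hrej : ∀ x ∈ S', x ∉ S → x ∉ p.Ch (insert x S)) :
    p.Ch (S ∪ S') = S := by
  classical
  have hsub : p.Ch (S ∪ S') ⊆ S := by
    intro x hx
    have hxS : x ∈ S ∪ S' := p.Ch_subset _ hx
    by_contra hxS2
    rcases Finset.mem_union.mp hxS with h | h
    · exact hxS2 h
    · exact hrej x h hxS2 (p.subs_mono hp (by
        intro y hy; rcases Finset.mem_insert.mp hy with rfl | hy
        · exact hxS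
        · exact Finset.mem_union_left _ hy) (Finset.mem_insert_self x S) hx)
  calc p.Ch (S ∪ S') = p.Ch S := (p.Ch_consistent hsub Finset.subset_union_left).symm
    _ = S := hIR

end Pref

section Restriction

variable {α : Type*} [DecidableEq α] [Fintype α] {p p'' : Pref α} {T : Finset α}

theorem restr_Ch (hres : IsRestriction p T p'') (S : Finset α) :
    p''.Ch S = p.Ch (S ∩ T) := by
  classical
  set A := p.Ch (S ∩ T) with hA
  have hAsub : A ⊆ S ∩ T := p.Ch_subset _
  have hAT : A ⊆ T := hAsub.trans Finset.inter_subset_right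
  refine p''.Ch_eq_of (hAsub.trans Finset.inter_subset_left) (fun B hB hne => ?_)
  by_cases hBT : B ⊆ T
  · have hBst : B ⊆ S ∩ T := Finset.subset_inter hB hBT
    rcases p.Ch_max hBst with h | h
    · exact absurd h hne
    · exact (hres.2.2 A B hAT hBT).mpr h
  · have hEB : p''.gt ∅ B := hres.1 B hBT
    by_cases hAe : A = ∅
    · rwa [hAe]
    · have : p.gt A ∅ := by
        rcases p.Ch_max (Finset.empty_subset (S ∩ T)) with h | h
        · exact absurd h.symm hAe
        · exact h
      exact p''.gt_trans ((hres.2.1 A hAT).mpr this) hEB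

theorem restr_sub (hres : IsRestriction p T p'') (hp : p.Substitutable) :
    p''.Substitutable := by
  classical
  intro S w w' hw hw' hne hch
  rw [restr_Ch hres] at hch ⊢
  have hset : S.erase w' ∩ T = (S ∩ T).erase w' := by
    ext x; simp only [Finset.mem_inter, Finset.mem_erase]; tauto
  rw [hset]
  by_cases hw'T : w' ∈ S ∩ T
  · exact hp (S ∩ T) w w' (p.Ch_subset _ hch) hw'T hne hch
  · rwa [Finset.erase_eq_of_notMem hw'T]

theorem restr_lad (hres : IsRestriction p T p'') (hl : p.LAD) : p''.LAD := by
  intro Y X hYX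
  rw [restr_Ch hres, restr_Ch hres]
  exact hl _ _ (Finset.inter_subset_inter_right hYX)

end Restriction

section RuralCore

attribute [local instance] Classical.propDecidable

variable {F W : Type*} [DecidableEq F] [Fintype F] [DecidableEq W] [Fintype W]

/-- Workers available to firm `f` in the contract set `X`. -/
noncomputable def secF (X : Set (F × W)) (f : F) : Finset W :=
  Finset.univ.filter fun w => (f, w) ∈ X

/-- Firms available to worker `w` in the contract set `X`. -/
noncomputable def secW (X : Set (F × W)) (w : W) : Finset F :=
  Finset.univ.filter fun f => (f, w) ∈ X

@[simp] theorem mem_secF {X : Set (F × W)} {f : F} {w : W} :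
    w ∈ secF X f ↔ (f, w) ∈ X := by simp [secF]

@[simp] theorem mem_secW {X : Set (F × W)} {f : F} {w : W} :
    f ∈ secW X w ↔ (f, w) ∈ X := by simp [secW]

variable (Q : Profile F W)

/-- Contracts chosen by the firms. -/
def CFc (X : Set (F × W)) : Set (F × W) := {z ∈ X | z.2 ∈ (Q.fp z.1).Ch (secF X z.1)}
/-- Contracts chosen by the workers. -/
def CWc (X : Set (F × W)) : Set (F × W) := {z ∈ X | z.1 ∈ (Q.wp z.2).Ch (secW X z.2)}
def RFc (X : Set (F × W)) : Set (F × W) := X \ CFc Q X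
def RWc (X : Set (F × W)) : Set (F × W) := X \ CWc Q X

theorem secF_mono {X X' : Set (F × W)} (h : X ⊆ X') (f : F) : secF X f ⊆ secF X' f := by
  intro w hw; simp only [mem_secF] at *; exact h hw

theorem secW_mono {X X' : Set (F × W)} (h : X ⊆ X') (w : W) : secW X w ⊆ secW X' w := by
  intro f hf; simp only [mem_secW] at *; exact h hf

theorem RFc_mono (hsub : ∀ f, (Q.fp f).Substitutable) {X X' : Set (F × W)} (h : X ⊆ X') :
    RFc Q X ⊆ RFc Q X' := by
  rintro ⟨f, w⟩ hz
  obtain ⟨hzX, hzn⟩ := hz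
  refine ⟨h hzX, fun hc => ?_⟩
  exact hzn ⟨hzX, (Q.fp f).subs_mono (hsub f) (secF_mono h f) (mem_secF.mpr hzX) hc.2⟩

theorem RWc_mono (hsub : ∀ w, (Q.wp w).Substitutable) {X X' : Set (F × W)} (h : X ⊆ X') :
    RWc Q X ⊆ RWc Q X' := by
  rintro ⟨f, w⟩ hz
  obtain ⟨hzX, hzn⟩ := hz
  refine ⟨h hzX, fun hc => ?_⟩
  exact hzn ⟨hzX, (Q.wp w).subs_mono (hsub w) (secW_mono h w) (mem_secW.mpr hzX) hc.2⟩

/-- The Hatfield–Milgrom operator. -/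
def HM (hsub : Q.Substitutable) :
    (Set (F × W) × (Set (F × W))ᵒᵈ) →o (Set (F × W) × (Set (F × W))ᵒᵈ) where
  toFun p := ((RWc Q (OrderDual.ofDual p.2))ᶜ, OrderDual.toDual (RFc Q p.1)ᶜ)
  monotone' := by
    rintro ⟨X, Y⟩ ⟨X', Y'⟩ ⟨h1, h2⟩
    constructor
    · exact Set.compl_subset_compl.mpr (RWc_mono Q hsub.2 h2)
    · exact Set.compl_subset_compl.mpr (RFc_mono Q hsub.1 h1)

end RuralCore

section RuralCore2

attribute [local instance] Classical.propDecidable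
set_option linter.unusedSectionVars false

variable {F W : Type*} [DecidableEq F] [Fintype F] [DecidableEq W] [Fintype W]
variable (Q : Profile F W)

/-- The contract set of a matching. -/
def MSet (μ : Matching F W) : Set (F × W) := {z | z.2 ∈ μ.fm z.1}

@[simp] theorem mem_MSet {μ : Matching F W} {z : F × W} :
    z ∈ MSet μ ↔ z.2 ∈ μ.fm z.1 := Iff.rfl

@[simp] theorem secF_MSet (μ : Matching F W) (f : F) : secF (MSet μ) f = μ.fm f := by
  ext w; simp [MSet]

@[simp] theorem secW_MSet (μ : Matching F W) (w : W) : secW (MSet μ) w = μ.wm w := by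
  ext f; simp [MSet, μ.compat]

/-- Firm-side contract set associated with a stable matching. -/
def XSet (μ : Matching F W) : Set (F × W) :=
  MSet μ ∪ {z | z.2 ∉ μ.fm z.1 ∧ z.1 ∈ (Q.wp z.2).Ch (insert z.1 (μ.wm z.2))}

/-- Worker-side contract set associated with a stable matching. -/
def YSet (μ : Matching F W) : Set (F × W) :=
  MSet μ ∪ {z | z.2 ∉ μ.fm z.1 ∧ z.1 ∉ (Q.wp z.2).Ch (insert z.1 (μ.wm z.2))}

theorem secF_XSet (μ : Matching F W) (f : F) :
    secF (XSet Q μ) f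
      = μ.fm f ∪ Finset.univ.filter
          (fun w => w ∉ μ.fm f ∧ f ∈ (Q.wp w).Ch (insert f (μ.wm w))) := by
  ext w; simp [XSet, MSet]

theorem secW_YSet (μ : Matching F W) (w : W) :
    secW (YSet Q μ) w
      = μ.wm w ∪ Finset.univ.filter
          (fun f => f ∉ μ.wm w ∧ f ∉ (Q.wp w).Ch (insert f (μ.wm w))) := by
  ext f; simp [YSet, MSet, μ.compat]

theorem Ch_secF_XSet (hsub : Q.Substitutable) {μ : Matching F W} (hs : Stable Q μ) (f : F) :
    (Q.fp f).Ch (secF (XSet Q μ) f) = μ.fm f := by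
  rw [secF_XSet]
  refine (Q.fp f).Ch_union_eq (hsub.1 f) (hs.1.1 f) (fun x hx hxn => ?_)
  simp only [Finset.mem_filter] at hx
  intro hc
  exact hs.2 x f ⟨hxn, hc, hx.2.2⟩

theorem Ch_secW_YSet (hsub : Q.Substitutable) {μ : Matching F W} (hs : Stable Q μ) (w : W) :
    (Q.wp w).Ch (secW (YSet Q μ) w) = μ.wm w := by
  rw [secW_YSet]
  refine (Q.wp w).Ch_union_eq (hsub.2 w) (hs.1.2 w) (fun x hx hxn => ?_)
  simp only [Finset.mem_filter] at hx
  exact hx.2.2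

theorem HM_fixed (hsub : Q.Substitutable) {μ : Matching F W} (hs : Stable Q μ) :
    HM Q hsub (XSet Q μ, OrderDual.toDual (YSet Q μ))
      = (XSet Q μ, OrderDual.toDual (YSet Q μ)) := by
  have hCF : CFc Q (XSet Q μ) = MSet μ := by
    ext ⟨f, w⟩
    simp only [CFc, Set.mem_setOf_eq, Ch_secF_XSet Q hsub hs, mem_MSet]
    constructor
    · exact fun h => h.2
    · intro h; exact ⟨Or.inl h, h⟩
  have hCW : CWc Q (YSet Q μ) = MSet μ := by
    ext ⟨f, w⟩
    simp only [CWc, Set.mem_setOf_eq, Ch_secW_YSet Q hsub hs, mem_MSet, μ.compat]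
    constructor
    · exact fun h => h.2
    · intro h; exact ⟨Or.inl ((μ.compat f w).mpr h), h⟩
  have hRF : (RFc Q (XSet Q μ))ᶜ = YSet Q μ := by
    have h0 : RFc Q (XSet Q μ) = XSet Q μ \ MSet μ := by rw [RFc, hCF]
    rw [h0]
    ext ⟨f, w⟩
    simp only [XSet, YSet, Set.mem_compl_iff, Set.mem_diff, Set.mem_union,
      Set.mem_setOf_eq, mem_MSet]
    tauto
  have hRW : (RWc Q (YSet Q μ))ᶜ = XSet Q μ := by
    have h0 : RWc Q (YSet Q μ) = YSet Q μ \ MSet μ := by rw [RWc, hCW]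
    rw [h0]
    ext ⟨f, w⟩
    simp only [XSet, YSet, Set.mem_compl_iff, Set.mem_diff, Set.mem_union,
      Set.mem_setOf_eq, mem_MSet]
    tauto
  simp only [HM, OrderHom.coe_mk, Prod.mk.injEq]
  exact Prod.ext (by simpa using hRW) (by exact hRF)

/-- Double-counting: summing section sizes over firms or over workers gives the same. -/
theorem sum_secF_eq_sum_secW (X : Set (F × W)) :
    ∑ f, (secF X f).card = ∑ w, (secW X w).card := by
  have h1 : ∀ f, (secF X f).card = ∑ w, if (f, w) ∈ X then 1 else 0 := by
    intro f; rw [secF, Finset.card_filter]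
  have h2 : ∀ w, (secW X w).card = ∑ f, if (f, w) ∈ X then 1 else 0 := by
    intro w; rw [secW, Finset.card_filter]
  simp only [h1, h2]
  exact Finset.sum_comm

/-- The key rural-hospitals style invariant: the size of each firm's assignment
in any stable matching equals that in the least HM fixed point. -/
theorem card_fm_eq (hsub : Q.Substitutable) (hlad : Q.LAD)
    {μ : Matching F W} (hs : Stable Q μ) (f : F) :
    (μ.fm f).card
      = (secF (CFc Q (OrderHom.lfp (HM Q hsub)).1) f).card := by
  set L := OrderHom.lfp (HM Q hsub) with hL
  set Xs : Set (F × W) := L.1 with hXs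
  set Ys : Set (F × W) := OrderDual.ofDual L.2 with hYs
  have hfix : HM Q hsub L = L := OrderHom.map_lfp _
  have hXeq : Xs = (RWc Q Ys)ᶜ := by
    rw [hXs]; conv_lhs => rw [← hfix]
    rfl
  have hYeq : Ys = (RFc Q Xs)ᶜ := by
    rw [hYs]; conv_lhs => rw [← hfix]
    rfl
  have hle : L ≤ (XSet Q μ, OrderDual.toDual (YSet Q μ)) :=
    OrderHom.lfp_le_fixed _ (HM_fixed Q hsub hs)
  have hX : Xs ⊆ XSet Q μ := hle.1
  have hY : YSet Q μ ⊆ Ys := hle.2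
  -- the candidate allocation
  set A : Set (F × W) := CFc Q Xs with hA
  have hsecA : ∀ f, secF A f = (Q.fp f).Ch (secF Xs f) := by
    intro f'
    ext w; simp only [mem_secF, hA, CFc, Set.mem_setOf_eq]
    constructor
    · exact fun h => h.2
    · intro h; exact ⟨mem_secF.mp ((Q.fp f').Ch_subset _ h), h⟩
  -- A = Xs ∩ Ys = CWc Q Ys
  have hAeq : A = CWc Q Ys := by
    have h1 : A = Xs ∩ Ys := by
      rw [hA, hYeq]
      ext z
      simp only [CFc, RFc, Set.mem_setOf_eq, Set.mem_inter_iff, Set.mem_compl_iff,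
        Set.mem_diff]
      tauto
    have h2 : CWc Q Ys = Ys ∩ Xs := by
      conv_rhs => rw [hXeq]
      ext z
      simp only [CWc, RWc, Set.mem_setOf_eq, Set.mem_inter_iff, Set.mem_compl_iff,
        Set.mem_diff]
      tauto
    rw [h1, h2, Set.inter_comm]
  have hsecAW : ∀ w, secW A w = (Q.wp w).Ch (secW Ys w) := by
    intro w
    rw [hAeq]
    ext f'; simp only [mem_secW, CWc, Set.mem_setOf_eq]
    constructor
    · exact fun h => h.2
    · intro h; exact ⟨mem_secW.mp ((Q.wp w).Ch_subset _ h), h⟩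
  -- pointwise inequalities
  have hfle : ∀ f', (secF A f').card ≤ (μ.fm f').card := by
    intro f'
    rw [hsecA, ← Ch_secF_XSet Q hsub hs f']
    exact hlad.1 f' _ _ (secF_mono hX f')
  have hwle : ∀ w, (μ.wm w).card ≤ (secW A w).card := by
    intro w
    rw [hsecAW, ← Ch_secW_YSet Q hsub hs w]
    exact hlad.2 w _ _ (secW_mono hY w)
  -- sums
  have hsum1 : ∑ f', (μ.fm f').card = ∑ w, (μ.wm w).card := by
    have := sum_secF_eq_sum_secW (MSet μ)
    simpa using this
  have hsum2 : ∑ f', (secF A f').card = ∑ w, (secW A w).card := sum_secF_eq_sum_secW A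
  have hsums : ∑ f', (μ.fm f').card ≤ ∑ f', (secF A f').card := by
    calc ∑ f', (μ.fm f').card = ∑ w, (μ.wm w).card := hsum1
      _ ≤ ∑ w, (secW A w).card := Finset.sum_le_sum (fun w _ => hwle w)
      _ = ∑ f', (secF A f').card := hsum2.symm
  have hsums' : ∑ f', (secF A f').card ≤ ∑ f', (μ.fm f').card :=
    Finset.sum_le_sum (fun f' _ => hfle f')
  have heq : ∑ f', (secF A f').card = ∑ f', (μ.fm f').card := le_antisymm hsums' hsums
  have := (Finset.sum_eq_sum_iff_of_le (fun f' _ => hfle f')).mp heq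
  exact (this f (Finset.mem_univ f)).symm

end RuralCore2

/-- Proposition 2 of the paper.  With substitutable and LAD
preferences, if `h` is a stable matching rule, `μ` is stable for `(F, W, ≻)`,
`f ∈ F`, and `≻'' = (≻_{-f}, ≻_f|_{μ(f)})`, then `h(≻'')(f) = μ(f)`. -/
theorem stmt3 {F W : Type*} [DecidableEq F] [Fintype F] [DecidableEq W] [Fintype W]
    (P : Profile F W) (hsub : P.Substitutable) (hlad : P.LAD)
    (h : Profile F W → Matching F W)
    (hrule : ∀ P' : Profile F W, P'.Substitutable → P'.LAD → Stable P' (h P'))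
    (f : F) (μ : Matching F W) (hμ : Stable P μ)
    (p'' : Pref W) (hres : IsRestriction (P.fp f) (μ.fm f) p'') :
    (h (P.updateFirm f p'')).fm f = μ.fm f := by
  classical
  set T := μ.fm f with hTdef
  have hT : (P.fp f).Ch T = T := hμ.1.1 f
  set P'' := P.updateFirm f p'' with hP''
  have hfp : P''.fp f = p'' := by
    show Function.update P.fp f p'' f = p''
    exact Function.update_self f p'' P.fp
  have hfp' : ∀ f', f' ≠ f → P''.fp f' = P.fp f' := fun f' hne => by
    show Function.update P.fp f p'' f' = P.fp f'
    exact Function.update_of_ne hne p'' P.fp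
  have hwp : P''.wp = P.wp := rfl
  have hsub'' : P''.Substitutable := by
    refine ⟨fun f' => ?_, fun w => hsub.2 w⟩
    by_cases hne : f' = f
    · subst hne; rw [hfp]; exact restr_sub hres (hsub.1 f')
    · rw [hfp' f' hne]; exact hsub.1 f'
  have hlad'' : P''.LAD := by
    refine ⟨fun f' => ?_, fun w => hlad.2 w⟩
    by_cases hne : f' = f
    · subst hne; rw [hfp]; exact restr_lad hres (hlad.1 f')
    · rw [hfp' f' hne]; exact hlad.1 f'
  have hstab'' : Stable P'' μ := by
    refine ⟨⟨fun f' => ?_, fun w => hμ.1.2 w⟩, fun w f0 hb => ?_⟩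
    · by_cases hne : f' = f
      · subst hne
        rw [hfp, restr_Ch hres, Finset.inter_self]
        exact hT
      · rw [hfp' f' hne]; exact hμ.1.1 f'
    · obtain ⟨h1, h2, h3⟩ := hb
      by_cases hne : f0 = f
      · subst hne
        rw [hfp, restr_Ch hres,
          Finset.inter_eq_right.mpr (Finset.subset_insert w T), hT] at h2
        exact h1 h2
      · rw [hfp' f0 hne] at h2
        exact hμ.2 w f0 ⟨h1, h2, h3⟩
  have hν : Stable P'' (h P'') := hrule P'' hsub'' hlad''
  have hνsub : (h P'').fm f ⊆ T := by
    have hIR := hν.1.1 f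
    rw [hfp, restr_Ch hres] at hIR
    intro x hx
    rw [← hIR] at hx
    exact Finset.inter_subset_right ((P.fp f).Ch_subset _ hx)
  have hc1 := card_fm_eq P'' hsub'' hlad'' hν f
  have hc2 := card_fm_eq P'' hsub'' hlad'' hstab'' f
  exact Finset.eq_of_subset_of_card_le hνsub (le_of_eq (hc2.trans hc1.symm))
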